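/- arXiv:1604.01433 — 2 statements merged into one kernel-verified Lean document; each statement's English description precedes it below -/
import Mathlib

section
/- For p, q ∈ (0,1/2) and all r ∈ [0,1], 0 ≤ f(r) ≤ g(r), where g(r) = h₂(r ∗ q) − h₂(r) and f(r) = h₂(r ∗ q) − (1 − p∗q)·h₂(r ∗ (pq/(1−p∗q))) − (p∗q)·h₂(r ∗ (p(1−q)/(p∗q))). -/
/-- Binary convolution `a ∗ b = a(1-b) + b(1-a)`. -/
noncomputable def bconv (a b : ℝ) : ℝ := a * (1 - b) + b * (1 - a)

/-- Binary entropy (base 2), with the convention `0 · log 0 = 0`. -/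
noncomputable def h2 (x : ℝ) : ℝ := -x * Real.logb 2 x - (1 - x) * Real.logb 2 (1 - x)

/-- `g(r) = h₂(r ∗ q) − h₂(r)`. -/
noncomputable def gfun (q r : ℝ) : ℝ := h2 (bconv r q) - h2 r

/-- `f(r) = h₂(r∗q) − (1−p∗q) h₂(r ∗ pq/(1−p∗q)) − (p∗q) h₂(r ∗ p(1−q)/(p∗q))`. -/
noncomputable def ffun (p q r : ℝ) : ℝ :=
  h2 (bconv r q) - (1 - bconv p q) * h2 (bconv r (p * q / (1 - bconv p q)))
    - bconv p q * h2 (bconv r (p * (1 - q) / bconv p q))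

lemma h2_eq (x : ℝ) : h2 x = (Real.log 2)⁻¹ * Real.binEntropy x := by
  simp [h2, Real.binEntropy, Real.log_inv, Real.logb]
  ring

lemma h2_one_sub (x : ℝ) : h2 (1 - x) = h2 x := by
  simp [h2]; ring

lemma concaveOn_h2 : ConcaveOn ℝ (Set.Icc (0:ℝ) 1) h2 := by
  have h := Real.strictConcave_binEntropy.concaveOn
  have := h.smul (c := (Real.log 2)⁻¹) (by positivity)
  rw [show h2 = fun x => (Real.log 2)⁻¹ • Real.binEntropy x from ?_]
  · exact this
  ext x
  simp [h2_eq]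

lemma bconv_mem {a b : ℝ} (ha : a ∈ Set.Icc (0:ℝ) 1) (hb : b ∈ Set.Icc (0:ℝ) 1) :
    bconv a b ∈ Set.Icc (0:ℝ) 1 := by
  obtain ⟨ha0, ha1⟩ := ha; obtain ⟨hb0, hb1⟩ := hb
  constructor <;> unfold bconv <;> nlinarith

lemma h2_combo (w₁ w₂ : ℝ) {x y : ℝ} (hx : x ∈ Set.Icc (0:ℝ) 1) (hy : y ∈ Set.Icc (0:ℝ) 1)
    (hw1 : 0 ≤ w₁) (hw2 : 0 ≤ w₂) (hs : w₁ + w₂ = 1) :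
    w₁ * h2 x + w₂ * h2 y ≤ h2 (w₁ * x + w₂ * y) :=
  concaveOn_h2.2 hx hy hw1 hw2 hs

lemma h2_le_bconv {a b : ℝ} (ha : a ∈ Set.Icc (0:ℝ) 1) (hb : b ∈ Set.Icc (0:ℝ) 1) :
    h2 a ≤ h2 (bconv a b) := by
  have h1a : (1 - a) ∈ Set.Icc (0:ℝ) 1 := ⟨by linarith [ha.2], by linarith [ha.1]⟩
  have key := h2_combo (1 - b) b ha h1a (by linarith [hb.2]) hb.1 (by ring)
  rw [h2_one_sub] at key
  have hb2 : bconv a b = (1 - b) * a + b * (1 - a) := by unfold bconv; ring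
  rw [hb2]
  calc h2 a = (1 - b) * h2 a + b * h2 a := by ring
    _ ≤ _ := key

theorem stmt3 (p q : ℝ) (hp : p ∈ Set.Ioo (0:ℝ) (1/2)) (hq : q ∈ Set.Ioo (0:ℝ) (1/2))
    (r : ℝ) (hr : r ∈ Set.Icc (0:ℝ) 1) :
    0 ≤ ffun p q r ∧ ffun p q r ≤ gfun q r := by
  obtain ⟨hp0, hp1⟩ := hp
  obtain ⟨hq0, hq1⟩ := hq
  have hv0 : 0 < bconv p q := by unfold bconv; nlinarith
  have hv1 : bconv p q < 1 := by unfold bconv; nlinarith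
  have ha : p * q / (1 - bconv p q) ∈ Set.Icc (0:ℝ) 1 := by
    constructor
    · exact div_nonneg (by positivity) (by linarith)
    · rw [div_le_one (by linarith)]
      unfold bconv; nlinarith
  have hb : p * (1 - q) / bconv p q ∈ Set.Icc (0:ℝ) 1 := by
    constructor
    · exact div_nonneg (by nlinarith) (le_of_lt hv0)
    · rw [div_le_one hv0]
      unfold bconv; nlinarith
  have hra := bconv_mem hr ha
  have hrb := bconv_mem hr hb
  -- key identity: (1-v)·(r∗a) + v·(1-(r∗b)) = r∗q
  have key : (1 - bconv p q) * bconv r (p * q / (1 - bconv p q))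
      + bconv p q * (1 - bconv r (p * (1 - q) / bconv p q)) = bconv r q := by
    have h1 : bconv p q ≠ 0 := ne_of_gt hv0
    have h2 : (1:ℝ) - bconv p q ≠ 0 := by
      intro h; apply absurd hv1; linarith [h]
    unfold bconv at *
    field_simp
    ring
  constructor
  · -- 0 ≤ ffun
    have h1rb : (1 - bconv r (p * (1 - q) / bconv p q)) ∈ Set.Icc (0:ℝ) 1 :=
      ⟨by linarith [hrb.2], by linarith [hrb.1]⟩
    have combo := h2_combo (1 - bconv p q) (bconv p q) hra h1rb
      (by linarith) (le_of_lt hv0) (by ring)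
    rw [key, h2_one_sub] at combo
    unfold ffun
    linarith
  · -- ffun ≤ gfun
    have h1 : h2 r ≤ h2 (bconv r (p * q / (1 - bconv p q))) := h2_le_bconv hr ha
    have h2b : h2 r ≤ h2 (bconv r (p * (1 - q) / bconv p q)) := h2_le_bconv hr hb
    unfold ffun gfun
    nlinarith [hv0, hv1]
end

section
/- For p, q ∈ (0,1/2), the function ν(r) = f(r) − g(r) is strictly concave on [0, 1/2], where f and g are the binary relevance-rate functions. -/
open Real Set

lemma h2_eq_s4 (x : ℝ) : h2 x = binEntropy x / Real.log 2 := by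
  unfold h2 binEntropy Real.logb
  rw [Real.log_inv, Real.log_inv]
  ring

lemma bconv_mem_s4 {x a : ℝ} (hx : x ∈ Ioo (0:ℝ) 1) (ha : a ∈ Ioo (0:ℝ) 1) :
    bconv x a ∈ Ioo (0:ℝ) 1 := by
  obtain ⟨hx0, hx1⟩ := hx; obtain ⟨ha0, ha1⟩ := ha
  constructor
  · unfold bconv; nlinarith
  · unfold bconv; nlinarith

lemma hasDerivAt_bconv (a x : ℝ) : HasDerivAt (fun r => bconv r a) (1 - 2*a) x := by
  have h : (fun r => bconv r a) = fun r => (1 - 2*a) * r + a := by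
    funext r; unfold bconv; ring
  rw [h]
  simpa using ((hasDerivAt_id x).const_mul (1 - 2*a)).add_const a

/-- The composed entropy term has the expected derivative. -/
lemma hasDerivAt_binEntropy_bconv {a x : ℝ} (hx : x ∈ Ioo (0:ℝ) 1) (ha : a ∈ Ioo (0:ℝ) 1) :
    HasDerivAt (fun r => binEntropy (bconv r a))
      ((Real.log (1 - bconv x a) - Real.log (bconv x a)) * (1 - 2*a)) x := by
  have hs := bconv_mem_s4 hx ha
  exact (Real.hasDerivAt_binEntropy (ne_of_gt hs.1) (ne_of_lt hs.2)).comp x (hasDerivAt_bconv a x)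

section main

variable {w1 w2 a b : ℝ}

/-- First derivative of the core function. -/
noncomputable def G' (w1 w2 a b x : ℝ) : ℝ :=
  (Real.log (1 - x) - Real.log x)
    - (w1 * ((Real.log (1 - bconv x a) - Real.log (bconv x a)) * (1 - 2*a))
       + w2 * ((Real.log (1 - bconv x b) - Real.log (bconv x b)) * (1 - 2*b)))

lemma hasDerivAt_G (ha : a ∈ Ioo (0:ℝ) 1) (hb : b ∈ Ioo (0:ℝ) 1) {x : ℝ}
    (hx : x ∈ Ioo (0:ℝ) 1) :
    HasDerivAt (fun r => binEntropy r
        - (w1 * binEntropy (bconv r a) + w2 * binEntropy (bconv r b))) (G' w1 w2 a b x) x := by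
  exact (Real.hasDerivAt_binEntropy (ne_of_gt hx.1) (ne_of_lt hx.2)).sub
    (((hasDerivAt_binEntropy_bconv hx ha).const_mul w1).add
     ((hasDerivAt_binEntropy_bconv hx hb).const_mul w2))

/-- derivative of `x ↦ log (1 - bconv x a) - log (bconv x a)`. -/
lemma hasDerivAt_logterm {a x : ℝ} (hx : x ∈ Ioo (0:ℝ) 1) (ha : a ∈ Ioo (0:ℝ) 1) :
    HasDerivAt (fun r => Real.log (1 - bconv r a) - Real.log (bconv r a))
      ((1 - bconv x a)⁻¹ * (-(1 - 2*a)) - (bconv x a)⁻¹ * (1 - 2*a)) x := by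
  have hs := bconv_mem_s4 hx ha
  have h1 : HasDerivAt (fun r => Real.log (1 - bconv r a)) ((1 - bconv x a)⁻¹ * (-(1 - 2*a))) x := by
    have hlin : HasDerivAt (fun r => 1 - bconv r a) (-(1 - 2*a)) x := by
      have h := (hasDerivAt_const x (1:ℝ)).sub (hasDerivAt_bconv a x)
      simp only [zero_sub] at h
      exact h
    exact (Real.hasDerivAt_log (by linarith [hs.2])).comp x hlin
  have h2 : HasDerivAt (fun r => Real.log (bconv r a)) ((bconv x a)⁻¹ * (1 - 2*a)) x :=
    by have h := (Real.hasDerivAt_log (ne_of_gt hs.1)).comp x (hasDerivAt_bconv a x); exact h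
  exact h1.sub h2

lemma hasDerivAt_G' (ha : a ∈ Ioo (0:ℝ) 1) (hb : b ∈ Ioo (0:ℝ) 1) {x : ℝ}
    (hx : x ∈ Ioo (0:ℝ) 1) :
    HasDerivAt (G' w1 w2 a b)
      (((1 - x)⁻¹ * (-1) - x⁻¹ * 1)
        - (w1 * (((1 - bconv x a)⁻¹ * (-(1 - 2*a)) - (bconv x a)⁻¹ * (1 - 2*a)) * (1 - 2*a))
           + w2 * (((1 - bconv x b)⁻¹ * (-(1 - 2*b)) - (bconv x b)⁻¹ * (1 - 2*b)) * (1 - 2*b)))) x := by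
  have h0 : HasDerivAt (fun r => Real.log (1 - r) - Real.log r)
      ((1 - x)⁻¹ * (-1) - x⁻¹ * 1) x := by
    have ha' : HasDerivAt (fun r : ℝ => Real.log (1 - r)) ((1 - x)⁻¹ * (-1)) x := by
      have hlin : HasDerivAt (fun r : ℝ => 1 - r) (-1) x := by
        have h := (hasDerivAt_const x (1:ℝ)).sub (hasDerivAt_id x)
        simp only [zero_sub] at h
        exact h
      exact (Real.hasDerivAt_log (by linarith [hx.2])).comp x hlin
    have hb' : HasDerivAt Real.log x⁻¹ x := Real.hasDerivAt_log (ne_of_gt hx.1)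
    have h := ha'.sub hb'
    rw [mul_one]
    exact h
  exact h0.sub ((((hasDerivAt_logterm hx ha).mul_const (1 - 2*a)).const_mul w1).add
    (((hasDerivAt_logterm hx hb).mul_const (1 - 2*b)).const_mul w2))

lemma key_frac {a x : ℝ} (hx : x ∈ Ioo (0:ℝ) 1) (ha : a ∈ Ioo (0:ℝ) 1) :
    (1 - 2*a)^2 / (bconv x a * (1 - bconv x a)) < 1 / (x * (1 - x)) := by
  have hs := bconv_mem_s4 hx ha
  have hS : 0 < bconv x a * (1 - bconv x a) := mul_pos hs.1 (by linarith [hs.2])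
  have hA : 0 < x * (1 - x) := mul_pos hx.1 (by linarith [hx.2])
  rw [div_lt_div_iff₀ hS hA]
  have key : bconv x a * (1 - bconv x a)
      = (1 - 2*a)^2 * (x * (1 - x)) + a * (1 - a) := by unfold bconv; ring
  nlinarith [mul_pos ha.1 (by linarith [ha.2] : (0:ℝ) < 1 - a)]

lemma main_concave (hw1 : 0 < w1) (hw2 : 0 < w2) (hw : w1 + w2 = 1)
    (ha : a ∈ Ioo (0:ℝ) 1) (hb : b ∈ Ioo (0:ℝ) 1) :
    StrictConcaveOn ℝ (Icc (0:ℝ) (1/2))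
      (fun r => binEntropy r - (w1 * binEntropy (bconv r a) + w2 * binEntropy (bconv r b))) := by
  set G : ℝ → ℝ := fun r => binEntropy r - (w1 * binEntropy (bconv r a) + w2 * binEntropy (bconv r b))
    with hG
  apply strictConcaveOn_of_deriv2_neg (convex_Icc 0 (1/2))
  · have hc : Continuous G := by
      rw [hG]; unfold bconv; fun_prop
    exact hc.continuousOn
  · intro x hx
    rw [interior_Icc] at hx
    have hx01 : x ∈ Ioo (0:ℝ) 1 := ⟨hx.1, by linarith [hx.2]⟩
    have hev : deriv G =ᶠ[nhds x] G' w1 w2 a b := by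
      filter_upwards [isOpen_Ioo.mem_nhds hx01] with y hy
      exact (hasDerivAt_G ha hb hy).deriv
    have h2d : deriv (deriv G) x = deriv (G' w1 w2 a b) x := hev.deriv_eq
    have hGd2 := (hasDerivAt_G' (w1 := w1) (w2 := w2) ha hb hx01).deriv
    have hiter : deriv^[2] G x = deriv (deriv G) x := by
      simp [Function.iterate_succ, Function.comp]
    rw [hiter, h2d, hGd2]
    -- now the inequality
    have hsa := bconv_mem_s4 hx01 ha
    have hsb := bconv_mem_s4 hx01 hb
    have hSa : 0 < bconv x a * (1 - bconv x a) := mul_pos hsa.1 (by linarith [hsa.2])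
    have hSb : 0 < bconv x b * (1 - bconv x b) := mul_pos hsb.1 (by linarith [hsb.2])
    have hA : 0 < x * (1 - x) := mul_pos hx01.1 (by linarith [hx01.2])
    have hx0 : x ≠ 0 := ne_of_gt hx01.1
    have hx1 : (1 - x) ≠ 0 := by linarith [hx01.2]
    have hsa0 : bconv x a ≠ 0 := ne_of_gt hsa.1
    have hsa1 : (1 - bconv x a) ≠ 0 := by linarith [hsa.2]
    have hsb0 : bconv x b ≠ 0 := ne_of_gt hsb.1
    have hsb1 : (1 - bconv x b) ≠ 0 := by linarith [hsb.2]
    have e0 : (1 - x)⁻¹ * (-1) - x⁻¹ * 1 = -(1 / (x * (1 - x))) := by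
      field_simp
      ring
    have ea : ((1 - bconv x a)⁻¹ * (-(1 - 2*a)) - (bconv x a)⁻¹ * (1 - 2*a)) * (1 - 2*a)
        = -((1 - 2*a)^2 / (bconv x a * (1 - bconv x a))) := by
      field_simp
      ring
    have eb : ((1 - bconv x b)⁻¹ * (-(1 - 2*b)) - (bconv x b)⁻¹ * (1 - 2*b)) * (1 - 2*b)
        = -((1 - 2*b)^2 / (bconv x b * (1 - bconv x b))) := by
      field_simp
      ring
    rw [e0, ea, eb]
    have ka := key_frac hx01 ha
    have kb := key_frac hx01 hb
    have ka' := mul_lt_mul_of_pos_left ka hw1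
    have kb' := mul_lt_mul_of_pos_left kb hw2
    have hsum : w1 * (1/(x*(1-x))) + w2 * (1/(x*(1-x))) = 1/(x*(1-x)) := by
      rw [← add_mul, hw, one_mul]
    linarith [ka', kb', hsum]

end main

theorem stmt4 (p q : ℝ) (hp : p ∈ Set.Ioo (0:ℝ) (1/2)) (hq : q ∈ Set.Ioo (0:ℝ) (1/2)) :
    StrictConcaveOn ℝ (Set.Icc (0:ℝ) (1/2)) (fun r => ffun p q r - gfun q r) := by
  obtain ⟨hp0, hp1⟩ := hp
  obtain ⟨hq0, hq1⟩ := hq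
  set μ : ℝ := bconv p q with hμ
  have hμ0 : 0 < μ := by unfold μ; unfold bconv; nlinarith
  have hμ1 : μ < 1 := by unfold μ; unfold bconv; nlinarith
  set a : ℝ := p * q / (1 - μ) with hadef
  set b : ℝ := p * (1 - q) / μ with hbdef
  have ha : a ∈ Ioo (0:ℝ) 1 := by
    constructor
    · exact div_pos (by nlinarith) (by linarith)
    · rw [div_lt_one (by linarith)]
      unfold μ; unfold bconv; nlinarith
  have hb : b ∈ Ioo (0:ℝ) 1 := by
    constructor
    · exact div_pos (by nlinarith) hμ0
    · rw [div_lt_one hμ0]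
      unfold μ; unfold bconv; nlinarith
  have hmain := main_concave (w1 := 1 - μ) (w2 := μ) (a := a) (b := b)
    (by linarith) hμ0 (by ring) ha hb
  have hfun : (fun r => ffun p q r - gfun q r)
      = fun r => (Real.log 2)⁻¹ * (binEntropy r
          - ((1 - μ) * binEntropy (bconv r a) + μ * binEntropy (bconv r b))) := by
    funext r
    unfold ffun gfun
    rw [h2_eq_s4, h2_eq_s4, h2_eq_s4, h2_eq_s4, ← hμ, ← hadef, ← hbdef]
    field_simp
    ring
  rw [hfun]
  have hlog : 0 < (Real.log 2)⁻¹ := inv_pos.2 (Real.log_pos (by norm_num))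
  constructor
  · exact hmain.1
  · intro x hx y hy hxy s t hs ht hst
    have := hmain.2 hx hy hxy hs ht hst
    simp only [smul_eq_mul] at *
    nlinarith [this]
end
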